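/- Let β, μ, δ > 0, S* = δ/β, let ṽ : (0,1] → ℝ be continuous and increasing, and let (I*, S*) with I* > 0 satisfy μ(1 − S*) − βS*I* = S*ṽ(I*). Define V(I,S) = S − S* ln(S/S*) + I − I* ln(I/I*) + (1/β)∫_{I*}^{I} (ṽ(i) − ṽ(I*))/i di. Then along any solution of I' = βIS − δI, S' = −βIS − ṽ(I)S − μS + μ with I, S > 0, the derivative of V along the flow equals −μ(S − S*)²/(S* S), and in particular is ≤ 0 with equality iff S = S*. -/

import Mathlib

open intervalIntegral

theorem SIR_lyapunov_derivative
    (β μ δ : ℝ) (hβ : 0 < β) (hμ : 0 < μ) (hδ : 0 < δ)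
    (Sstar : ℝ) (hSstar : Sstar = δ / β)
    (vv : ℝ → ℝ) (hcont : ContinuousOn vv (Set.Ioc 0 1))
    (hmono : MonotoneOn vv (Set.Ioc 0 1))
    (Istar : ℝ) (hIstar : Istar ∈ Set.Ioc (0:ℝ) 1)
    (heq : μ * (1 - Sstar) - β * Sstar * Istar = Sstar * vv Istar)
    (I S : ℝ → ℝ)
    (hpos : ∀ t, 0 < I t ∧ I t ≤ 1 ∧ 0 < S t)
    (hI : ∀ t, HasDerivAt I (β * I t * S t - δ * I t) t)
    (hS : ∀ t, HasDerivAt S (-(β * I t * S t) - vv (I t) * S t - μ * S t + μ) t) :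
    ∀ t, HasDerivAt
        (fun τ => S τ - Sstar * Real.log (S τ / Sstar)
          + I τ - Istar * Real.log (I τ / Istar)
          + (1/β) * ∫ i in Istar..(I τ), (vv i - vv Istar) / i)
        (-μ * (S t - Sstar)^2 / (Sstar * S t)) t ∧
      -μ * (S t - Sstar)^2 / (Sstar * S t) ≤ 0 ∧
      (-μ * (S t - Sstar)^2 / (Sstar * S t) = 0 ↔ S t = Sstar) := by
  have hSstarpos : 0 < Sstar := by rw [hSstar]; positivity
  have hδβ : δ = β * Sstar := by rw [hSstar]; field_simp
  -- extend vv
  set w : ℝ → ℝ := fun x => vv (min x 1) with hw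
  have hweq : ∀ x ∈ Set.Ioc (0:ℝ) 1, w x = vv x := by
    intro x hx; simp [hw, min_eq_left hx.2]
  set g : ℝ → ℝ := fun i => (w i - vv Istar) / i with hg
  have hgcont : ContinuousOn g (Set.Ioi 0) := by
    apply ContinuousOn.div
    · apply ContinuousOn.sub _ continuousOn_const
      apply hcont.comp (by fun_prop)
      intro x hx
      exact ⟨lt_min hx zero_lt_one, min_le_right _ _⟩
    · exact continuousOn_id
    · intro x hx; exact ne_of_gt hx
  have hsub : ∀ x ∈ Set.Ioc (0:ℝ) 1, Set.uIcc Istar x ⊆ Set.Ioi (0:ℝ) := by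
    intro x hx y hy
    rcases Set.mem_uIcc.1 hy with h | h
    · exact lt_of_lt_of_le hIstar.1 h.1
    · exact lt_of_lt_of_le hx.1 h.1
  have hsub' : ∀ x ∈ Set.Ioc (0:ℝ) 1, Set.uIcc Istar x ⊆ Set.Ioc (0:ℝ) 1 := by
    intro x hx y hy
    refine ⟨hsub x hx hy, ?_⟩
    rcases Set.mem_uIcc.1 hy with h | h
    · exact le_trans h.2 hx.2
    · exact le_trans h.2 hIstar.2
  -- congruence of integrals
  have hintcong : ∀ x ∈ Set.Ioc (0:ℝ) 1,
      (∫ i in Istar..x, (vv i - vv Istar) / i) = ∫ i in Istar..x, g i := by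
    intro x hx
    apply intervalIntegral.integral_congr
    intro y hy
    simp only [hg]
    rw [hweq y (hsub' x hx hy)]
  -- FTC derivative of the integral term
  have hftc : ∀ x ∈ Set.Ioc (0:ℝ) 1,
      HasDerivAt (fun u => ∫ i in Istar..u, g i) (g x) x := by
    intro x hx
    refine intervalIntegral.integral_hasDerivAt_right ?_ ?_ ?_
    · exact (hgcont.mono (hsub x hx)).intervalIntegrable
    · exact hgcont.stronglyMeasurableAtFilter isOpen_Ioi x (hx.1)
    · exact (hgcont x hx.1).continuousAt (Ioi_mem_nhds hx.1)
  intro t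
  obtain ⟨hIt, hIt1, hSt⟩ := hpos t
  have hItmem : I t ∈ Set.Ioc (0:ℝ) 1 := ⟨hIt, hIt1⟩
  have hSne : S t ≠ 0 := ne_of_gt hSt
  have hIne : I t ≠ 0 := ne_of_gt hIt
  refine ⟨?_, ?_, ?_⟩
  · -- rewrite the function
    have hfun : (fun τ => S τ - Sstar * Real.log (S τ / Sstar)
          + I τ - Istar * Real.log (I τ / Istar)
          + (1/β) * ∫ i in Istar..(I τ), (vv i - vv Istar) / i)
        = fun τ => S τ - Sstar * Real.log (S τ / Sstar)
          + I τ - Istar * Real.log (I τ / Istar)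
          + (1/β) * ∫ i in Istar..(I τ), g i := by
      funext τ
      obtain ⟨hIτ, hIτ1, _⟩ := hpos τ
      rw [hintcong (I τ) ⟨hIτ, hIτ1⟩]
    rw [hfun]
    have hlogS : HasDerivAt (fun τ => Real.log (S τ / Sstar))
        ((-(β * I t * S t) - vv (I t) * S t - μ * S t + μ) / S t) t := by
      have : HasDerivAt (fun τ => Real.log (S τ) - Real.log Sstar)
          ((-(β * I t * S t) - vv (I t) * S t - μ * S t + μ) / S t) t := by
        simpa using ((hS t).log hSne).sub_const (Real.log Sstar)
      refine this.congr_of_eventuallyEq ?_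
      filter_upwards with τ
      rw [Real.log_div (ne_of_gt (hpos τ).2.2) (ne_of_gt hSstarpos)]
    have hlogI : HasDerivAt (fun τ => Real.log (I τ / Istar))
        ((β * I t * S t - δ * I t) / I t) t := by
      have : HasDerivAt (fun τ => Real.log (I τ) - Real.log Istar)
          ((β * I t * S t - δ * I t) / I t) t := by
        simpa using ((hI t).log hIne).sub_const (Real.log Istar)
      refine this.congr_of_eventuallyEq ?_
      filter_upwards with τ
      rw [Real.log_div (ne_of_gt (hpos τ).1) (ne_of_gt hIstar.1)]
    have hint : HasDerivAt (fun τ => ∫ i in Istar..(I τ), g i)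
        (g (I t) * (β * I t * S t - δ * I t)) t :=
      (hftc (I t) hItmem).comp t (hI t)
    have hD := ((((hS t).sub (hlogS.const_mul Sstar)).add (hI t)).sub
        (hlogI.const_mul Istar)).add (hint.const_mul (1/β))
    refine hD.congr_deriv ?_
    symm
    have hgval : g (I t) = (vv (I t) - vv Istar) / I t := by
      simp only [hg]; rw [hweq (I t) hItmem]
    rw [hgval, hδβ]
    have hkey : μ = Sstar * (μ + β * Istar + vv Istar) := by ring_nf; ring_nf at heq; linarith
    field_simp
    linear_combination (S t * Sstar - S t ^ 2) * hkey
  · apply div_nonpos_of_nonpos_of_nonneg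
    · nlinarith [sq_nonneg (S t - Sstar)]
    · positivity
  · constructor
    · intro h
      have : (S t - Sstar)^2 = 0 := by
        have hden : Sstar * S t ≠ 0 := by positivity
        have := (div_eq_zero_iff.1 h).resolve_right hden
        have hμ' : μ ≠ 0 := ne_of_gt hμ
        nlinarith [sq_nonneg (S t - Sstar)]
      have := pow_eq_zero_iff (n := 2) (by norm_num) |>.1 this
      linarith
    · intro h; rw [h]; ring
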